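/- For the symmetric oligopoly system dqi/dt = qi(f - 2qi - Σ_{j≠i} qj), the function I1 = q1(q2 - q3)/(q3(q1 - q2)) is a first integral: its derivative along any solution with q3(q1 - q2) ≠ 0 is zero. -/

import Mathlib

theorem symmetric_first_integral (f : ℝ) (q1 q2 q3 : ℝ → ℝ)
    (h1 : ∀ t, HasDerivAt q1 (q1 t * (f - 2*q1 t - q2 t - q3 t)) t)
    (h2 : ∀ t, HasDerivAt q2 (q2 t * (f - q1 t - 2*q2 t - q3 t)) t)
    (h3 : ∀ t, HasDerivAt q3 (q3 t * (f - q1 t - q2 t - 2*q3 t)) t)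
    (t : ℝ) (hd : q3 t * (q1 t - q2 t) ≠ 0) :
    HasDerivAt (fun s => q1 s * (q2 s - q3 s) / (q3 s * (q1 s - q2 s))) 0 t := by
  have hN : HasDerivAt (fun s => q1 s * (q2 s - q3 s))
      (q1 t * (f - 2*q1 t - q2 t - q3 t) * (q2 t - q3 t)
        + q1 t * (q2 t * (f - q1 t - 2*q2 t - q3 t) - q3 t * (f - q1 t - q2 t - 2*q3 t))) t :=
    (h1 t).mul ((h2 t).sub (h3 t))
  have hD : HasDerivAt (fun s => q3 s * (q1 s - q2 s))
      (q3 t * (f - q1 t - q2 t - 2*q3 t) * (q1 t - q2 t)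
        + q3 t * (q1 t * (f - 2*q1 t - q2 t - q3 t) - q2 t * (f - q1 t - 2*q2 t - q3 t))) t :=
    (h3 t).mul ((h1 t).sub (h2 t))
  have := hN.div hD hd
  refine this.congr_deriv ?_
  rw [div_eq_zero_iff]
  left
  ring
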